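/- Let w be an involution in a Weyl group W and s a simple reflection with sw = ws and ℓ(sw) < ℓ(w). Then R_{sw} = {α ∈ R_w : ⟨α_s^∨, α⟩ = 0}, where R_z = {α ∈ R : z(α) = −α}. -/

import Mathlib

open scoped RealInnerProductSpace

variable {V : Type*} [NormedAddCommGroup V] [InnerProductSpace ℝ V] [FiniteDimensional ℝ V]

/-- The reflection in the hyperplane orthogonal to `α`. -/
noncomputable def wrefl (α : V) : V ≃ₗᵢ[ℝ] V := Submodule.reflection (ℝ ∙ α)ᗮ

/-- A (reduced) root system in a real inner product space. -/
structure IsRootSystem (R : Finset V) : Prop where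
  ne_zero : (0 : V) ∉ R
  span_eq_top : Submodule.span ℝ (R : Set V) = ⊤
  reduced : ∀ α ∈ R, ∀ c : ℝ, c • α ∈ R → c = 1 ∨ c = -1
  refl_mem : ∀ α ∈ R, ∀ β ∈ R, wrefl α β ∈ R
  pairing_int : ∀ α ∈ R, ∀ β ∈ R, ∃ n : ℤ, 2 * ⟪α, β⟫ / ⟪α, α⟫ = (n : ℝ)

/-- The Weyl group of a root system, as a group of linear isometries. -/
noncomputable def weylGroup (R : Finset V) : Subgroup (V ≃ₗᵢ[ℝ] V) :=
  Subgroup.closure (wrefl '' (R : Set V))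

/-- A system of positive roots. -/
structure IsPositiveSystem (R Rpos : Finset V) : Prop where
  subset : Rpos ⊆ R
  mem_or_neg_mem : ∀ α ∈ R, α ∈ Rpos ∨ -α ∈ Rpos
  not_mem_and_neg_mem : ∀ α ∈ Rpos, -α ∉ Rpos
  add_mem : ∀ α ∈ Rpos, ∀ β ∈ Rpos, α + β ∈ R → α + β ∈ Rpos

/-- A simple (indecomposable) positive root. -/
def IsSimpleRoot (Rpos : Finset V) (α : V) : Prop :=
  α ∈ Rpos ∧ ¬∃ β ∈ Rpos, ∃ γ ∈ Rpos, α = β + γ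

/-- The length of `w`, i.e. the number of positive roots sent by `w` to negative roots. -/
noncomputable def len (Rpos : Finset V) (w : V ≃ₗᵢ[ℝ] V) : ℕ := by
  classical exact (Rpos.filter fun α => w α ∉ Rpos).card

/-- The coroot attached to a root. -/
noncomputable def cv (α : V) : V := (2 / ⟪α, α⟫) • α

/-- The dominance order: `α ≤ α'` iff `α' - α` is a nonnegative combination of
positive roots. -/
def rle (Rpos : Finset V) (α α' : V) : Prop :=
  ∃ c : V → ℝ, (∀ β, 0 ≤ c β) ∧ α' - α = ∑ β ∈ Rpos, c β • β

/-- `α` is maximal in `S` for the dominance order. -/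
def IsMaxIn (Rpos : Finset V) (S : Set V) (α : V) : Prop :=
  α ∈ S ∧ ∀ α' ∈ S, rle Rpos α α' → rle Rpos α' α

/-- The `n`-th layer of Kostant's cascade: the maximal positive roots among those
orthogonal to all roots of the previous layers. -/
def cascadeLevel (Rpos : Finset V) : ℕ → Set V
  | n =>
    {α | IsMaxIn Rpos
      {β | β ∈ Rpos ∧ ∀ m, m < n → ∀ γ ∈ cascadeLevel Rpos m, ⟪γ, β⟫ = 0} α}
  termination_by n => n

/-- Kostant's cascade of orthogonal roots. -/
def cascade (Rpos : Finset V) : Set V := ⋃ n, cascadeLevel Rpos n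

/-- The set of positive roots on which an involution `w` acts by `-1`. -/
noncomputable def posNegSet (Rpos : Finset V) (w : V ≃ₗᵢ[ℝ] V) : Finset V := by
  classical exact Rpos.filter fun α => w α = -α

/-- The element `r_w`: the sum of the coroots of the cascade of the root system
`R_w = {α ∈ R : w α = -α}`. -/
noncomputable def rInv (Rpos : Finset V) (w : V ≃ₗᵢ[ℝ] V) : V :=
  ∑ α ∈ posNegSet Rpos w, Set.indicator (cascade (posNegSet Rpos w)) cv α

set_option linter.unusedSectionVars false

lemma wrefl_apply (α β : V) :
    wrefl α β = β - (2 * ⟪α, β⟫ / ⟪α, α⟫) • α := by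
  have h2 : ⟪α, α⟫ = ‖α‖ ^ 2 := real_inner_self_eq_norm_sq α
  rw [wrefl, Submodule.reflection_orthogonal_apply, Submodule.reflection_singleton_apply, h2]
  simp only [RCLike.ofReal_real_eq_id, id_eq]
  module

lemma inner_self_pos' {β : V} (hβ : β ≠ 0) : 0 < ⟪β, β⟫ := by
  rw [real_inner_self_eq_norm_sq]
  exact pow_pos (norm_pos_iff.2 hβ) 2

section
variable {R : Finset V} (hR : IsRootSystem R)
include hR

lemma root_ne_zero {β : V} (hβ : β ∈ R) : β ≠ 0 := fun h => hR.ne_zero (h ▸ hβ)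

lemma root_inner_self_pos {β : V} (hβ : β ∈ R) : 0 < ⟪β, β⟫ :=
  inner_self_pos' (root_ne_zero hR hβ)

lemma neg_root_mem {β : V} (hβ : β ∈ R) : -β ∈ R := by
  have h := hR.refl_mem β hβ β hβ
  have h1 : (2 * ⟪β, β⟫ / ⟪β, β⟫ : ℝ) = 2 := by
    rw [mul_div_assoc, div_self (root_inner_self_pos hR hβ).ne', mul_one]
  rw [wrefl_apply, h1] at h
  have h2 : β - (2 : ℝ) • β = -β := by module
  rwa [h2] at h

/-- If two roots have negative inner product and are not opposite, their sum is a root. -/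
lemma sum_root_mem {β γ : V} (hβ : β ∈ R) (hγ : γ ∈ R) (hne : γ ≠ -β)
    (hinner : ⟪β, γ⟫ < 0) : β + γ ∈ R := by
  have hb := root_inner_self_pos hR hβ
  have hg := root_inner_self_pos hR hγ
  obtain ⟨n, hn⟩ := hR.pairing_int β hβ γ hγ
  obtain ⟨m, hm⟩ := hR.pairing_int γ hγ β hβ
  have hsym : ⟪γ, β⟫ = ⟪β, γ⟫ := real_inner_comm β γ
  -- strict Cauchy-Schwarz
  have hcs : ⟪β, γ⟫ * ⟪β, γ⟫ < ⟪β, β⟫ * ⟪γ, γ⟫ := by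
    have hneq : ‖γ‖ • (-β) ≠ ‖-β‖ • γ := by
      intro h
      have hb0 : ‖β‖ ≠ 0 := norm_ne_zero_iff.2 (root_ne_zero hR hβ)
      have hγc : γ = (-(‖β‖⁻¹ * ‖γ‖)) • β := by
        have h2 : ‖β‖⁻¹ • (‖γ‖ • (-β)) = ‖β‖⁻¹ • (‖-β‖ • γ) := by rw [h]
        rw [norm_neg, smul_smul, smul_smul, inv_mul_cancel₀ hb0, one_smul, smul_neg] at h2
        rw [neg_smul]
        exact h2.symm
      have hmem : (-(‖β‖⁻¹ * ‖γ‖)) • β ∈ R := by rw [← hγc]; exact hγ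
      have hcnn : (0:ℝ) ≤ ‖β‖⁻¹ * ‖γ‖ := by positivity
      rcases hR.reduced β hβ _ hmem with h1 | h1
      · linarith
      · rw [h1, neg_one_smul] at hγc
        exact hne hγc
    have hlt : ⟪-β, γ⟫ < ‖-β‖ * ‖γ‖ := inner_lt_norm_mul_iff_real.2 hneq
    rw [inner_neg_left, norm_neg] at hlt
    have habs : |⟪β, γ⟫| < ‖β‖ * ‖γ‖ := by rw [abs_of_neg hinner]; linarith
    have h3 := mul_self_lt_mul_self (abs_nonneg _) habs
    rw [abs_mul_abs_self] at h3
    calc ⟪β, γ⟫ * ⟪β, γ⟫ < ‖β‖ * ‖γ‖ * (‖β‖ * ‖γ‖) := h3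
    _ = ⟪β, β⟫ * ⟪γ, γ⟫ := by
        rw [real_inner_self_eq_norm_sq, real_inner_self_eq_norm_sq]; ring
  -- n, m negative integers with n * m < 4
  have hnneg : (n : ℝ) < 0 := by
    rw [← hn]; exact div_neg_of_neg_of_pos (by linarith) hb
  have hmneg : (m : ℝ) < 0 := by
    rw [← hm, hsym]; exact div_neg_of_neg_of_pos (by linarith) hg
  have hprod : (n : ℝ) * m < 4 := by
    rw [← hn, ← hm, hsym, div_mul_div_comm, div_lt_iff₀ (by positivity)]
    nlinarith
  have hn1 : n < 0 := by exact_mod_cast hnneg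
  have hm1 : m < 0 := by exact_mod_cast hmneg
  have hprodZ : n * m < 4 := by exact_mod_cast hprod
  have hcase : n = -1 ∨ m = -1 := by
    by_contra hcon
    push_neg at hcon
    have h4 : n ≤ -2 := by omega
    have h5 : m ≤ -2 := by omega
    nlinarith
  rcases hcase with h1 | h1
  · have h6 := hR.refl_mem β hβ γ hγ
    rw [wrefl_apply, hn, h1] at h6
    have he : γ - ((-1 : ℤ) : ℝ) • β = β + γ := by push_cast; module
    rwa [he] at h6
  · have h6 := hR.refl_mem γ hγ β hβ
    rw [wrefl_apply, hm, h1] at h6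
    have he : β - ((-1 : ℤ) : ℝ) • γ = β + γ := by push_cast; module
    rwa [he] at h6
end

section
variable {R : Finset V} (hR : IsRootSystem R)
include hR

lemma inner_sq_lt {β γ : V} (hβ : β ∈ R) (hγ : γ ∈ R) (h1 : γ ≠ β) (h2 : γ ≠ -β) :
    ⟪β, γ⟫ * ⟪β, γ⟫ < ⟪β, β⟫ * ⟪γ, γ⟫ := by
  have hb0 : ‖β‖ ≠ 0 := norm_ne_zero_iff.2 (root_ne_zero hR hβ)
  have hg0 : (0:ℝ) < ‖γ‖ := norm_pos_iff.2 (root_ne_zero hR hγ)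
  have hcpos : (0:ℝ) < ‖β‖⁻¹ * ‖γ‖ := by positivity
  have hred : ∀ t : ℝ, γ = t • β → t = 1 ∨ t = -1 := fun t h => hR.reduced β hβ t (h ▸ hγ)
  have hlt1 : ⟪β, γ⟫ < ‖β‖ * ‖γ‖ := by
    refine inner_lt_norm_mul_iff_real.2 (fun h => ?_)
    have hγc : γ = (‖β‖⁻¹ * ‖γ‖) • β := by
      have h3 : ‖β‖⁻¹ • (‖γ‖ • β) = ‖β‖⁻¹ • (‖β‖ • γ) := by rw [h]
      rw [smul_smul, smul_smul, inv_mul_cancel₀ hb0, one_smul] at h3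
      exact h3.symm
    rcases hred _ hγc with hc | hc
    · rw [hc, one_smul] at hγc; exact h1 hγc
    · linarith [hc ▸ hcpos]
  have hlt2 : ⟪-β, γ⟫ < ‖-β‖ * ‖γ‖ := by
    refine inner_lt_norm_mul_iff_real.2 (fun h => ?_)
    have hγc : γ = (-(‖β‖⁻¹ * ‖γ‖)) • β := by
      have h3 : ‖β‖⁻¹ • (‖γ‖ • (-β)) = ‖β‖⁻¹ • (‖-β‖ • γ) := by rw [h]
      rw [norm_neg, smul_smul, smul_smul, inv_mul_cancel₀ hb0, one_smul, smul_neg] at h3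
      rw [neg_smul]
      exact h3.symm
    rcases hred _ hγc with hc | hc
    · linarith
    · rw [hc, neg_one_smul] at hγc; exact h2 hγc
  rw [inner_neg_left, norm_neg] at hlt2
  have habs : |⟪β, γ⟫| < ‖β‖ * ‖γ‖ := abs_lt.2 ⟨by linarith, hlt1⟩
  have h3 := mul_self_lt_mul_self (abs_nonneg _) habs
  rw [abs_mul_abs_self] at h3
  calc ⟪β, γ⟫ * ⟪β, γ⟫ < ‖β‖ * ‖γ‖ * (‖β‖ * ‖γ‖) := h3
  _ = ⟪β, β⟫ * ⟪γ, γ⟫ := by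
      rw [real_inner_self_eq_norm_sq, real_inner_self_eq_norm_sq]; ring
end

section
variable {R Rpos : Finset V} (hR : IsRootSystem R) (hP : IsPositiveSystem R Rpos)
include hR hP

/-- No two positive roots can sum to a multiple of a simple root. -/
lemma not_sum_smul {α γ δ : V} (hs : IsSimpleRoot Rpos α) (hγ : γ ∈ Rpos) (hδ : δ ∈ Rpos)
    (hγα : γ ≠ α) (n : ℤ) (hsum : γ + δ = ((n : ℝ)) • α)
    (hpair : 2 * ⟪α, γ⟫ / ⟪α, α⟫ = (n : ℝ)) : False := by
  have hαp : α ∈ Rpos := hs.1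
  have hαR : α ∈ R := hP.subset hαp
  have hγR : γ ∈ R := hP.subset hγ
  have hδR : δ ∈ R := hP.subset hδ
  have hna : -α ∉ Rpos := hP.not_mem_and_neg_mem α hαp
  have ha : (0:ℝ) < ⟪α, α⟫ := root_inner_self_pos hR hαR
  -- inner product values
  have hγi : ⟪α, γ⟫ = (n : ℝ) * ⟪α, α⟫ / 2 := by
    field_simp at hpair
    linarith
  have hδi : ⟪α, δ⟫ = (n : ℝ) * ⟪α, α⟫ / 2 := by
    have h1 : ⟪α, γ + δ⟫ = (n : ℝ) * ⟪α, α⟫ := by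
      rw [hsum, real_inner_smul_right]
    rw [inner_add_right] at h1
    linarith
  -- γ, δ are not ±α
  have hγnα : γ ≠ -α := fun h => hna (h ▸ hγ)
  have hδnα : δ ≠ -α := fun h => hna (h ▸ hδ)
  have hδα : δ ≠ α := by
    intro h
    have hγc : γ = ((n : ℝ) - 1) • α := by
      rw [sub_smul, one_smul, ← hsum, h]
      abel
    rcases hR.reduced α hαR _ (hγc ▸ hγR) with hc | hc
    · rw [hc, one_smul] at hγc; exact hγα hγc
    · rw [hc, neg_one_smul] at hγc; exact hγnα hγc
  -- the bound |n| ≤ 3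
  have hbound : -3 ≤ n ∧ n ≤ 3 := by
    rcases eq_or_ne ⟪α, γ⟫ 0 with h0 | h0
    · have h1 : (n : ℝ) * ⟪α, α⟫ = 0 := by rw [h0] at hγi; linarith
      rcases mul_eq_zero.1 h1 with h | h
      · have : n = 0 := by exact_mod_cast h
        omega
      · linarith
    · have hg : (0:ℝ) < ⟪γ, γ⟫ := root_inner_self_pos hR hγR
      obtain ⟨m, hm⟩ := hR.pairing_int γ hγR α hαR
      have hsq := inner_sq_lt hR hαR hγR hγα hγnα
      have hmv : ⟪γ, α⟫ = (m : ℝ) * ⟪γ, γ⟫ / 2 := by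
        field_simp at hm
        linarith
      have hsym : ⟪γ, α⟫ = ⟪α, γ⟫ := real_inner_comm α γ
      have hprod : (n : ℝ) * (m : ℝ) < 4 := by
        have h4 : (n : ℝ) * ⟪α, α⟫ / 2 * ((m : ℝ) * ⟪γ, γ⟫ / 2) < ⟪α, α⟫ * ⟪γ, γ⟫ := by
          rw [← hγi, ← hmv, hsym]
          exact hsq
        nlinarith
      have hprodZ : n * m < 4 := by exact_mod_cast hprod
      rcases lt_trichotomy (⟪α, γ⟫ : ℝ) 0 with ht | ht | ht
      · have hn' : n < 0 := by
          have h5 : (n:ℝ) < 0 := by nlinarith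
          exact_mod_cast h5
        have hm' : m < 0 := by
          have h5 : (m:ℝ) < 0 := by rw [hsym] at hmv; nlinarith
          exact_mod_cast h5
        have key : -n ≤ n * m := by nlinarith
        omega
      · exact absurd ht h0
      · have hn' : 0 < n := by
          have h5 : (0:ℝ) < (n:ℝ) := by nlinarith
          exact_mod_cast h5
        have hm' : 0 < m := by
          have h5 : (0:ℝ) < (m:ℝ) := by rw [hsym] at hmv; nlinarith
          exact_mod_cast h5
        have key : n ≤ n * m := by nlinarith
        omega
  -- helper facts
  have hadd : ∀ β, β ∈ Rpos → ⟪α, β⟫ < 0 → α + β ∈ Rpos := by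
    intro β hβ hin
    have hβnα : β ≠ -α := fun h => hna (h ▸ hβ)
    exact hP.add_mem α hαp β hβ (sum_root_mem hR hαR (hP.subset hβ) hβnα hin)
  have hsubR : ∀ β, β ∈ R → (0:ℝ) < ⟪α, β⟫ → β ≠ α → -α + β ∈ R := by
    intro β hβ hin hne
    refine sum_root_mem hR (neg_root_mem hR hαR) hβ ?_ ?_
    · rwa [neg_neg]
    · rw [inner_neg_left]; linarith
  have hsimple := hs.2
  obtain ⟨hn3, hn3'⟩ := hbound
  interval_cases n
  · -- n = -3
    push_cast at hγi hδi hsum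
    have hγ1 : α + γ ∈ Rpos := hadd γ hγ (by nlinarith)
    have hγ1i : ⟪α, α + γ⟫ = -(⟪α, α⟫ / 2) := by rw [inner_add_right]; linarith
    have hγ2 : α + (α + γ) ∈ Rpos := hadd _ hγ1 (by linarith)
    have hδ1 : α + δ ∈ Rpos := hadd δ hδ (by nlinarith)
    have hδ1i : ⟪α, α + δ⟫ = -(⟪α, α⟫ / 2) := by rw [inner_add_right]; linarith
    have hδ2 : α + (α + δ) ∈ Rpos := hadd _ hδ1 (by linarith)
    refine hsimple ⟨_, hγ2, _, hδ2, ?_⟩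
    rw [show α + (α + γ) + (α + (α + δ)) = (γ + δ) + (4:ℝ) • α from by module, hsum]
    module
  · -- n = -2
    have hγ1 : α + γ ∈ Rpos := hadd γ hγ (by nlinarith)
    have hδ1 : α + δ ∈ Rpos := hadd δ hδ (by nlinarith)
    refine hP.not_mem_and_neg_mem _ hγ1 ?_
    have : -(α + γ) = α + δ := by
      have h2 : γ + δ = (-2 : ℝ) • α := by rw [hsum]; norm_num
      have h3 : δ = (-2 : ℝ) • α - γ := by rw [← h2]; abel
      rw [h3]; module
    rwa [this]
  · -- n = -1
    have hγ1 : α + γ ∈ Rpos := hadd γ hγ (by nlinarith)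
    refine hP.not_mem_and_neg_mem _ hγ1 ?_
    have : -(α + γ) = δ := by
      have h2 : γ + δ = (-1 : ℝ) • α := by rw [hsum]; norm_num
      have h3 : δ = (-1 : ℝ) • α - γ := by rw [← h2]; abel
      rw [h3]; module
    rwa [this]
  · -- n = 0
    refine hP.not_mem_and_neg_mem γ hγ ?_
    have h2 : γ + δ = 0 := by rw [hsum]; norm_num
    exact (eq_neg_of_add_eq_zero_right h2) ▸ hδ
  · -- n = 1
    refine hsimple ⟨γ, hγ, δ, hδ, ?_⟩
    rw [hsum]; norm_num
  · -- n = 2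
    have he : -α + γ ∈ R := hsubR γ hγR (by nlinarith) hγα
    rcases hP.mem_or_neg_mem _ he with h | h
    · refine hsimple ⟨δ, hδ, _, h, ?_⟩
      have h2 : γ + δ = (2 : ℝ) • α := by rw [hsum]; norm_num
      rw [show δ + (-α + γ) = (γ + δ) + (-1:ℝ) • α by module, h2]; module
    · refine hsimple ⟨γ, hγ, _, h, ?_⟩
      module
  · -- n = 3
    have hpos : (0:ℝ) < ⟪α, γ⟫ := by nlinarith
    have he : -α + γ ∈ R := hsubR γ hγR hpos hγα
    rcases hP.mem_or_neg_mem _ he with h | h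
    · -- -α + γ ∈ Rpos
      have hei : (0:ℝ) < ⟪α, -α + γ⟫ := by
        rw [inner_add_right, inner_neg_right]; nlinarith
      have henα : -α + γ ≠ α := by
        intro hcon
        have h5 : γ = (2 : ℝ) • α := by
          rw [show γ = α + (-α + γ) from by module, hcon]; module
        have h6 : (2 : ℝ) • α ∈ R := by rw [← h5]; exact hγR
        rcases hR.reduced α hαR 2 h6 with h' | h' <;> norm_num at h'
      have he2 : -α + (-α + γ) ∈ R := hsubR _ (hP.subset h) hei henα
      rcases hP.mem_or_neg_mem _ he2 with h2 | h2
      · refine hsimple ⟨δ, hδ, _, h2, ?_⟩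
        have h3 : γ + δ = (3 : ℝ) • α := by rw [hsum]; norm_num
        rw [show δ + (-α + (-α + γ)) = (γ + δ) + (-2:ℝ) • α by module, h3]; module
      · refine hsimple ⟨_, h, _, h2, ?_⟩
        module
    · refine hsimple ⟨γ, hγ, _, h, ?_⟩
      module
end

section
variable {R Rpos : Finset V} (hR : IsRootSystem R) (hP : IsPositiveSystem R Rpos)
include hR hP

/-- The reflection in a simple root permutes the other positive roots. -/
lemma simple_refl_pos {α γ : V} (hs : IsSimpleRoot Rpos α) (hγ : γ ∈ Rpos) (hne : γ ≠ α) :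
    wrefl α γ ∈ Rpos := by
  by_contra hcon
  have hαR : α ∈ R := hP.subset hs.1
  have hγR : γ ∈ R := hP.subset hγ
  have hrR : wrefl α γ ∈ R := hR.refl_mem α hαR γ hγR
  have hδ : -(wrefl α γ) ∈ Rpos := by
    rcases hP.mem_or_neg_mem _ hrR with h | h
    · exact absurd h hcon
    · exact h
  obtain ⟨n, hn⟩ := hR.pairing_int α hαR γ hγR
  refine not_sum_smul hR hP hs hγ hδ hne n ?_ hn
  rw [wrefl_apply, hn]
  module

omit hP in
lemma weyl_root_mem {w : V ≃ₗᵢ[ℝ] V} (hw : w ∈ weylGroup R) {β : V} (hβ : β ∈ R) :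
    w β ∈ R := by
  classical
  revert β
  have main : ∀ u ∈ weylGroup R, ∀ β ∈ R, u β ∈ R := by
    intro u hu
    induction hu using Subgroup.closure_induction with
    | mem x hx =>
      obtain ⟨δ, hδ, rfl⟩ := hx
      exact fun β hβ => hR.refl_mem δ hδ β hβ
    | one => intro β hβ; simpa using hβ
    | mul x y hx hy ihx ihy =>
      intro β hβ
      rw [LinearIsometryEquiv.coe_mul, Function.comp_apply]
      exact ihx _ (ihy β hβ)
    | inv x hx ih =>
      intro β hβ
      have himg : R.image x = R := by
        apply Finset.eq_of_subset_of_card_le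
        · intro b hb
          obtain ⟨c, hc, rfl⟩ := Finset.mem_image.1 hb
          exact ih c hc
        · rw [Finset.card_image_of_injective _ x.injective]
      obtain ⟨c, hc, hcb⟩ := Finset.mem_image.1 (himg ▸ hβ)
      have : x⁻¹ β = c := by
        rw [← hcb, LinearIsometryEquiv.coe_inv]
        exact x.symm_apply_apply c
      rw [this]
      exact hc
  exact fun β hβ => main w hw β hβ

/-- If `ℓ(s_α w) < ℓ(w)` then `w α ≠ α`. -/
lemma walpha_ne {α : V} (hs : IsSimpleRoot Rpos α) {w : V ≃ₗᵢ[ℝ] V} (hw : w ∈ weylGroup R)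
    (hw2 : w * w = 1) (hlen : len Rpos (wrefl α * w) < len Rpos w) : w α ≠ α := by
  classical
  intro heq
  have hsub : (Rpos.filter fun β => w β ∉ Rpos) ⊆
      (Rpos.filter fun β => (wrefl α * w) β ∉ Rpos) := by
    intro β hβ
    rw [Finset.mem_filter] at hβ ⊢
    obtain ⟨hβp, hβn⟩ := hβ
    refine ⟨hβp, fun hcon => ?_⟩
    have hβR : β ∈ R := hP.subset hβp
    have hwβR : w β ∈ R := weyl_root_mem hR hw hβR
    have hδ : -(w β) ∈ Rpos := by
      rcases hP.mem_or_neg_mem _ hwβR with h | h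
      · exact absurd h hβn
      · exact h
    rw [LinearIsometryEquiv.coe_mul, Function.comp_apply] at hcon
    have hsneg : wrefl α (-(w β)) ∉ Rpos := by
      rw [map_neg]
      intro h
      exact hP.not_mem_and_neg_mem _ hcon h
    have hδα : -(w β) = α := by
      by_contra hne
      exact hsneg (simple_refl_pos hR hP hs hδ hne)
    have hβα : β = -α := by
      have h1 : w (w β) = β := by
        have h3 := congrArg (fun u : V ≃ₗᵢ[ℝ] V => u β) hw2
        simpa [LinearIsometryEquiv.coe_mul] using h3
      have h2 : w β = -α := by rw [← hδα]; abel
      rw [h2, map_neg, heq] at h1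
      exact h1.symm
    rw [hβα] at hβp
    exact hP.not_mem_and_neg_mem α hs.1 hβp
  have := Finset.card_le_card hsub
  rw [len, len] at hlen
  omega
end

lemma wrefl_wrefl (α β : V) : wrefl α (wrefl α β) = β := Submodule.reflection_reflection _ β

/-- If `w` is an involution in the Weyl group and `s` is a simple reflection with
`sw = ws` and `ℓ(sw) < ℓ(w)`, then `R_{sw} = {α ∈ R_w : ⟨α_s^∨, α⟩ = 0}`. -/
theorem negRoots_of_commuting_descent
    {R Rpos : Finset V} (hR : IsRootSystem R) (hP : IsPositiveSystem R Rpos)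
    (w : V ≃ₗᵢ[ℝ] V) (hw : w ∈ weylGroup R) (hw2 : w * w = 1)
    (α : V) (hα : IsSimpleRoot Rpos α)
    (hc : wrefl α * w = w * wrefl α)
    (hlen : len Rpos (wrefl α * w) < len Rpos w) :
    {β : V | β ∈ R ∧ (wrefl α * w) β = -β} =
      {β : V | (β ∈ R ∧ w β = -β) ∧ 2 * ⟪α, β⟫ / ⟪α, α⟫ = 0} := by
  have hαR : α ∈ R := hP.subset hα.1
  have ha : (0:ℝ) < ⟪α, α⟫ := root_inner_self_pos hR hαR
  have hwα : w α ≠ α := walpha_ne hR hP hα hw hw2 hlen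
  ext β
  simp only [Set.mem_setOf_eq]
  constructor
  · rintro ⟨hβR, hs⟩
    rw [LinearIsometryEquiv.coe_mul, Function.comp_apply] at hs
    have hwβ : w β = -β + (2 * ⟪α, β⟫ / ⟪α, α⟫) • α := by
      have h1 : wrefl α (wrefl α (w β)) = w β := wrefl_wrefl α (w β)
      rw [hs, map_neg, wrefl_apply] at h1
      rw [← h1]
      module
    have h1 : w (w β) = β := by
      have h3 := congrArg (fun u : V ≃ₗᵢ[ℝ] V => u β) hw2
      simpa [LinearIsometryEquiv.coe_mul] using h3
    rw [hwβ, map_add, map_neg, map_smul, hwβ] at h1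
    have h2 : (2 * ⟪α, β⟫ / ⟪α, α⟫) • w α - (2 * ⟪α, β⟫ / ⟪α, α⟫) • α = 0 := by
      rw [show (2 * ⟪α, β⟫ / ⟪α, α⟫) • w α - (2 * ⟪α, β⟫ / ⟪α, α⟫) • α =
        (-(-β + (2 * ⟪α, β⟫ / ⟪α, α⟫) • α) + (2 * ⟪α, β⟫ / ⟪α, α⟫) • w α) - β from by module,
        h1, sub_self]
    rcases eq_or_ne (2 * ⟪α, β⟫ / ⟪α, α⟫ : ℝ) 0 with hc0 | hc0
    · refine ⟨⟨hβR, ?_⟩, hc0⟩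
      rw [hwβ, hc0, zero_smul, add_zero]
    · exfalso
      rw [← smul_sub] at h2
      rcases smul_eq_zero.1 h2 with h | h
      · exact hc0 h
      · exact hwα (by rwa [sub_eq_zero] at h)
  · rintro ⟨⟨hβR, hwβ⟩, hpair⟩
    have hinner : ⟪α, β⟫ = 0 := by
      rcases div_eq_zero_iff.1 hpair with h | h
      · linarith
      · linarith
    refine ⟨hβR, ?_⟩
    rw [LinearIsometryEquiv.coe_mul, Function.comp_apply, hwβ, map_neg, wrefl_apply, hinner]
    simp
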